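/- Let s ∈ ℕ and let ℰ be an s×s complex matrix with |ℰ_{jk}| ≤ σ_{jk}, where the nonnegative numbers σ_{jk} satisfy ∑_{l=1}^s σ_{jl} σ_{lk} ≤ (1/2) σ_{jk} for all j, k. Then I + ℰ is invertible and |(I+ℰ)^{-1}_{jk} - δ_{jk}| ≤ 2σ_{jk} for all j, k. -/

import Mathlib

open Matrix

attribute [local instance] Matrix.linftyOpNormedRing Matrix.linftyOpNormedAlgebra

theorem inv_one_add_E_bound (s : ℕ) (ℰ : Matrix (Fin s) (Fin s) ℂ)
    (σ : Matrix (Fin s) (Fin s) ℝ)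
    (hσpos : ∀ j k, 0 ≤ σ j k)
    (hE : ∀ j k, ‖ℰ j k‖ ≤ σ j k)
    (hcontr : ∀ j k, ∑ l : Fin s, σ j l * σ l k ≤ (1 / 2) * σ j k) :
    IsUnit (1 + ℰ) ∧
      ∀ j k, ‖(1 + ℰ)⁻¹ j k - (1 : Matrix (Fin s) (Fin s) ℂ) j k‖ ≤ 2 * σ j k := by
  classical
  -- entrywise bound on powers
  have hpow : ∀ n : ℕ, ∀ j k, ‖(ℰ ^ (n + 1)) j k‖ ≤ (1 / 2 : ℝ) ^ n * σ j k := by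
    intro n
    induction n with
    | zero => intro j k; simpa using hE j k
    | succ n ih =>
      intro j k
      have hmul : ℰ ^ (n + 2) = ℰ ^ (n + 1) * ℰ := by rw [pow_succ]
      rw [hmul, Matrix.mul_apply]
      calc ‖∑ l, (ℰ ^ (n + 1)) j l * ℰ l k‖
          ≤ ∑ l, ‖(ℰ ^ (n + 1)) j l * ℰ l k‖ := norm_sum_le _ _
        _ ≤ ∑ l, ((1 / 2 : ℝ) ^ n * σ j l) * σ l k := by
            refine Finset.sum_le_sum fun l _ => ?_
            rw [norm_mul]
            exact mul_le_mul (ih j l) (hE l k) (norm_nonneg _)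
              (mul_nonneg (by positivity) (hσpos j l))
        _ = (1 / 2 : ℝ) ^ n * ∑ l, σ j l * σ l k := by
            rw [Finset.mul_sum]; congr 1; ext l; ring
        _ ≤ (1 / 2 : ℝ) ^ n * ((1 / 2) * σ j k) := by
            apply mul_le_mul_of_nonneg_left (hcontr j k) (by positivity)
        _ = (1 / 2 : ℝ) ^ (n + 1) * σ j k := by ring
  -- matrix norm bound helper
  have hnormle : ∀ (A : Matrix (Fin s) (Fin s) ℂ) (r : ℝ), 0 ≤ r →
      (∀ j, ∑ k, ‖A j k‖ ≤ r) → ‖A‖ ≤ r := by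
    intro A r hr h
    rw [Matrix.linfty_opNorm_def, ← Real.coe_toNNReal r hr, NNReal.coe_le_coe]
    refine Finset.sup_le fun i _ => ?_
    rw [← NNReal.coe_le_coe, Real.coe_toNNReal r hr, NNReal.coe_sum]
    simpa using h i
  set C : ℝ := ∑ j, ∑ k, σ j k with hC
  have hCnonneg : 0 ≤ C := Finset.sum_nonneg fun j _ =>
    Finset.sum_nonneg fun k _ => hσpos j k
  have hrowC : ∀ j, ∑ k, σ j k ≤ C := by
    intro j
    exact Finset.single_le_sum (f := fun j => ∑ k, σ j k)
      (fun i _ => Finset.sum_nonneg fun k _ => hσpos i k) (Finset.mem_univ j)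
  -- entries of (-ℰ)^m have the same norms as those of ℰ^m
  have hnegentry : ∀ (m : ℕ) j k, ‖((-ℰ) ^ m) j k‖ = ‖(ℰ ^ m) j k‖ := by
    intro m j k
    rcases Nat.even_or_odd m with h | h
    · rw [h.neg_pow]
    · rw [h.neg_pow, Matrix.neg_apply, norm_neg]
  have hCnorm : ∀ n : ℕ, ‖(-ℰ) ^ (n + 1)‖ ≤ (1 / 2 : ℝ) ^ n * C := by
    intro n
    refine hnormle _ _ (by positivity) fun j => ?_
    calc ∑ k, ‖((-ℰ) ^ (n + 1)) j k‖ = ∑ k, ‖(ℰ ^ (n + 1)) j k‖ := by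
          exact Finset.sum_congr rfl fun k _ => hnegentry _ j k
      _ ≤ ∑ k, (1 / 2 : ℝ) ^ n * σ j k := Finset.sum_le_sum fun k _ => hpow n j k
      _ = (1 / 2 : ℝ) ^ n * ∑ k, σ j k := by rw [Finset.mul_sum]
      _ ≤ (1 / 2 : ℝ) ^ n * C := by
          exact mul_le_mul_of_nonneg_left (hrowC j) (by positivity)
  -- summability of the Neumann series
  have hgeo : Summable fun n : ℕ => (1 / 2 : ℝ) ^ n * C :=
    (summable_geometric_of_lt_one (by norm_num) (by norm_num)).mul_right C
  have hsum1 : Summable fun n : ℕ => (-ℰ) ^ (n + 1) :=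
    Summable.of_norm_bounded hgeo hCnorm
  have hsum : Summable fun n : ℕ => (-ℰ) ^ n := (summable_nat_add_iff 1).mp hsum1
  set B : Matrix (Fin s) (Fin s) ℂ := ∑' n : ℕ, (-ℰ) ^ n with hB
  set T : Matrix (Fin s) (Fin s) ℂ := ∑' n : ℕ, (-ℰ) ^ (n + 1) with hT
  have hBT : B = 1 + T := by
    rw [hB, Summable.tsum_eq_zero_add hsum, pow_zero]
  have hTleft : T = (-ℰ) * B := by
    rw [hT, hB, ← hsum.tsum_mul_left (-ℰ)]
    exact tsum_congr fun n => by rw [pow_succ']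
  have hTright : T = B * (-ℰ) := by
    rw [hT, hB, ← hsum.tsum_mul_right (-ℰ)]
    exact tsum_congr fun n => by rw [pow_succ]
  have hright : (1 + ℰ) * B = 1 := by
    have h1 : B = 1 + (-ℰ) * B := by rw [← hTleft, ← hBT]
    calc (1 + ℰ) * B = B + ℰ * B := by noncomm_ring
      _ = (1 + (-ℰ) * B) + ℰ * B := by rw [← h1]
      _ = 1 := by noncomm_ring
  have hleft : B * (1 + ℰ) = 1 := by
    have h1 : B = 1 + B * (-ℰ) := by rw [← hTright, ← hBT]
    calc B * (1 + ℰ) = B + B * ℰ := by noncomm_ring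
      _ = (1 + B * (-ℰ)) + B * ℰ := by rw [← h1]
      _ = 1 := by noncomm_ring
  have hunit : IsUnit (1 + ℰ) := ⟨⟨1 + ℰ, B, hright, hleft⟩, rfl⟩
  refine ⟨hunit, fun j k => ?_⟩
  have hinv : (1 + ℰ)⁻¹ = B := Matrix.inv_eq_right_inv hright
  -- entry of T as a convergent series
  let g : Matrix (Fin s) (Fin s) ℂ →ₗ[ℂ] ℂ :=
    { toFun := fun A => A j k
      map_add' := fun _ _ => rfl
      map_smul' := fun _ _ => rfl }
  have hgc : Continuous g := g.continuous_of_finiteDimensional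
  have hTjk : HasSum (fun n : ℕ => ((-ℰ) ^ (n + 1)) j k) (T j k) :=
    hsum1.hasSum.map g.toAddMonoidHom hgc
  have hgsum : HasSum (fun n : ℕ => (1 / 2 : ℝ) ^ n * σ j k) (2 * σ j k) := by
    have h := (hasSum_geometric_of_lt_one (r := (1 / 2 : ℝ)) (by norm_num)
      (by norm_num)).mul_right (σ j k)
    have e : (2 : ℝ) * σ j k = (1 - 1 / 2)⁻¹ * σ j k := by norm_num
    rw [e]
    exact h
  have hTb : ‖T j k‖ ≤ 2 * σ j k := by
    rw [← hTjk.tsum_eq]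
    refine tsum_of_norm_bounded hgsum fun n => ?_
    rw [hnegentry]
    exact hpow n j k
  have : (1 + ℰ)⁻¹ j k - (1 : Matrix (Fin s) (Fin s) ℂ) j k = T j k := by
    rw [hinv, hBT]
    simp [Matrix.add_apply]
  rw [this]
  exact hTb
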